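/- Let S = {x ∈ ℝ² : x₁² + x₂² ≤ 1, x₂ ≥ 0} be the upper half-disk. Then the valid inequality x₁ ≤ 1 is a finitely-irredundant inequality (FII) of S, even though the face S ∩ {x : x₁ = 1} = {(1,0)} is not an inclusionwise-maximal proper face of S (so x₁ ≤ 1 is not a facet-defining inequality of S). -/

import Mathlib

noncomputable section

/-- A valid inequality α·x ≤ β of a convex set S is a finitely-irredundant inequality (FII)
of S if no finite collection of valid inequalities of S, none of which is a positive scalar
multiple of (α, β), implies it. -/
def IsFII {n : ℕ} (S : Set (Fin n → ℝ)) (α : Fin n → ℝ) (β : ℝ) : Prop :=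
  (S ⊆ {x | ∑ i, α i * x i ≤ β}) ∧
  ∀ (k : ℕ) (a : Fin k → (Fin n → ℝ)) (b : Fin k → ℝ),
    (∀ i, S ⊆ {x : Fin n → ℝ | ∑ j, a i j * x j ≤ b i}) →
    (∀ i, ¬ ∃ c : ℝ, 0 < c ∧ a i = c • α ∧ b i = c * β) →
    ¬ ({x : Fin n → ℝ | ∀ i, ∑ j, a i j * x j ≤ b i} ⊆ {x | ∑ j, α j * x j ≤ β})

/-- A face of a convex set: a convex extreme subset. -/
def IsFace {E : Type*} [AddCommGroup E] [Module ℝ E] (S F : Set E) : Prop :=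
  Convex ℝ F ∧ IsExtreme ℝ S F

/-- A facet of a convex set: an inclusionwise-maximal proper face. -/
def IsFacet {E : Type*} [AddCommGroup E] [Module ℝ E] (S F : Set E) : Prop :=
  IsFace S F ∧ F ≠ S ∧ ∀ F' : Set E, IsFace S F' → F' ≠ S → F ⊆ F' → F' = F

/-- α·x ≤ β is a facet-defining inequality of P. -/
def FacetDefining {n : ℕ} (P : Set (Fin n → ℝ)) (α : Fin n → ℝ) (β : ℝ) : Prop :=
  (P ⊆ {x | ∑ i, α i * x i ≤ β}) ∧ IsFacet P (P ∩ {x | ∑ i, α i * x i = β})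

/-- The upper half-disk in ℝ². -/
def halfDisk : Set (Fin 2 → ℝ) := {x | x 0 ^ 2 + x 1 ^ 2 ≤ 1 ∧ 0 ≤ x 1}

lemma hmem10' : (![1,0] : Fin 2 → ℝ) ∈ halfDisk := by
  constructor <;> norm_num [halfDisk]

lemma hmem00' : (![0,0] : Fin 2 → ℝ) ∈ halfDisk := by
  constructor <;> norm_num [halfDisk]

lemma tight_a1_nonpos (a0 a1 b : ℝ)
    (hvalid : ∀ x ∈ halfDisk, a0 * x 0 + a1 * x 1 ≤ b)
    (htight : a0 = b) : a1 ≤ 0 := by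
  by_contra h
  push_neg at h
  have ha0 : 0 ≤ a0 := by
    have := hvalid ![0,0] hmem00'
    simp at this
    linarith [htight ▸ this]
  set s : ℝ := min 1 (a1/(a0+1)) with hs
  have hs0 : 0 < s := lt_min one_pos (by positivity)
  have hs1 : s ≤ 1 := min_le_left _ _
  have hsq : (0:ℝ) ≤ 1 - s^2 := by nlinarith
  set r := Real.sqrt (1 - s^2) with hr
  have hr0 : 0 ≤ r := Real.sqrt_nonneg _
  have hr2 : r^2 = 1 - s^2 := Real.sq_sqrt hsq
  have hxmem : (![r, s] : Fin 2 → ℝ) ∈ halfDisk := by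
    constructor
    · show r^2 + s^2 ≤ 1
      nlinarith
    · show (0:ℝ) ≤ s
      linarith
  have hv := hvalid _ hxmem
  simp only [Matrix.cons_val_zero, Matrix.cons_val_one, Matrix.head_cons] at hv
  have hrle : r ≤ 1 := by nlinarith
  have h1r : 1 - r ≤ s^2 := by nlinarith [mul_nonneg (sub_nonneg.2 hrle) hr0]
  have key : a1 * s ≤ a0 * s^2 := by nlinarith [mul_le_mul_of_nonneg_left h1r ha0]
  have h1 : a1 ≤ a0 * s := by
    have h' : a1 * s ≤ (a0 * s) * s := by nlinarith
    exact le_of_mul_le_mul_right h' hs0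
  have h2 : s * (a0 + 1) ≤ a1 := by
    have hle : s ≤ a1/(a0+1) := min_le_right _ _
    rw [le_div_iff₀ (by positivity)] at hle
    linarith
  nlinarith

-- the FII part (stated with halfDisk for testing)
lemma FII_part :
    ∀ (k : ℕ) (a : Fin k → (Fin 2 → ℝ)) (b : Fin k → ℝ),
    (∀ i, halfDisk ⊆ {x : Fin 2 → ℝ | ∑ j, a i j * x j ≤ b i}) →
    (∀ i, ¬ ∃ c : ℝ, 0 < c ∧ a i = c • (![1,0] : Fin 2 → ℝ) ∧ b i = c * 1) →
    ¬ ({x : Fin 2 → ℝ | ∀ i, ∑ j, a i j * x j ≤ b i} ⊆ {x | ∑ j, (![1,0] : Fin 2 → ℝ) j * x j ≤ 1}) := by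
  intro k a b hvalid hnotmul hsub
  have hev : ∀ i, ∀ᶠ ε in nhdsWithin (0:ℝ) (Set.Ioi 0),
      a i 0 * (1+ε) + a i 1 * Real.sqrt ε ≤ b i := by
    intro i
    have hvi : ∀ x ∈ halfDisk, a i 0 * x 0 + a i 1 * x 1 ≤ b i := by
      intro x hx
      have := hvalid i hx
      simpa [Fin.sum_univ_two] using this
    have h10 : a i 0 ≤ b i := by simpa using hvi ![1,0] hmem10'
    rcases lt_or_eq_of_le h10 with hlt | heq
    · have hcont : Filter.Tendsto (fun ε : ℝ => a i 0 * (1+ε) + a i 1 * Real.sqrt ε)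
          (nhdsWithin 0 (Set.Ioi 0)) (nhds (a i 0)) := by
        have hc : Filter.Tendsto (fun ε : ℝ => a i 0 * (1+ε) + a i 1 * Real.sqrt ε)
            (nhds 0) (nhds (a i 0 * (1+0) + a i 1 * Real.sqrt 0)) := by
          exact ((continuous_const.mul (continuous_const.add continuous_id)).add
            (continuous_const.mul Real.continuous_sqrt)).tendsto 0
        simpa using hc.mono_left nhdsWithin_le_nhds
      exact (hcont.eventually_lt_const hlt).mono (fun ε h => h.le)
    · have ha1 : a i 1 ≤ 0 := tight_a1_nonpos _ _ _ hvi heq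
      rcases lt_or_eq_of_le ha1 with ha1lt | ha1eq
      · have hg : Filter.Tendsto (fun ε : ℝ => a i 0 * Real.sqrt ε + a i 1)
            (nhdsWithin 0 (Set.Ioi 0)) (nhds (a i 1)) := by
          have hc : Filter.Tendsto (fun ε : ℝ => a i 0 * Real.sqrt ε + a i 1)
              (nhds 0) (nhds (a i 0 * Real.sqrt 0 + a i 1)) :=
            ((continuous_const.mul Real.continuous_sqrt).add continuous_const).tendsto 0
          simpa using hc.mono_left nhdsWithin_le_nhds
        have hgev := hg.eventually_lt_const ha1lt
        filter_upwards [hgev, self_mem_nhdsWithin] with ε hgε hε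
        have hε0 : (0:ℝ) < ε := hε
        have hsqm : Real.sqrt ε * Real.sqrt ε = ε := Real.mul_self_sqrt hε0.le
        have hsp : 0 < Real.sqrt ε := Real.sqrt_pos.2 hε0
        nlinarith [mul_le_mul_of_nonneg_left hgε.le hsp.le]
      · have ha0nn : 0 ≤ a i 0 := by
          have := hvi ![0,0] hmem00'
          simp at this
          linarith [heq ▸ this]
        have ha0 : a i 0 = 0 := by
          by_contra h0
          have hpos : 0 < a i 0 := ha0nn.lt_of_ne (Ne.symm h0)
          refine hnotmul i ⟨a i 0, hpos, ?_, ?_⟩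
          · funext j
            fin_cases j
            · show a i 0 = (a i 0 • ![(1:ℝ),0]) 0
              simp
            · show a i 1 = (a i 0 • ![(1:ℝ),0]) 1
              rw [ha1eq]; simp
          · simp [← heq]
        filter_upwards with ε
        simp [ha0, ha1eq, ← heq]
  have hall := Filter.eventually_all.2 hev
  obtain ⟨ε, hεall, hεpos⟩ := (hall.and self_mem_nhdsWithin).exists
  have hε0 : (0:ℝ) < ε := hεpos
  have hxk : (![1+ε, Real.sqrt ε] : Fin 2 → ℝ) ∈
      {x : Fin 2 → ℝ | ∀ i, ∑ j, a i j * x j ≤ b i} := by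
    intro i
    simpa [Fin.sum_univ_two] using hεall i
  have := hsub hxk
  simp [Fin.sum_univ_two] at this
  linarith

lemma part2 : halfDisk ∩ {x | ∑ i, (![1, 0] : Fin 2 → ℝ) i * x i = 1} = {![1, 0]} := by
  ext x
  simp only [halfDisk, Set.mem_inter_iff, Set.mem_setOf_eq, Set.mem_singleton_iff,
    Fin.sum_univ_two, Matrix.cons_val_zero, Matrix.cons_val_one, Matrix.head_cons]
  constructor
  · rintro ⟨⟨h1, h2⟩, h3⟩
    have hx0 : x 0 = 1 := by linarith
    have hx1 : x 1 = 0 := by nlinarith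
    funext j
    fin_cases j
    · simpa using hx0
    · simpa using hx1
  · rintro rfl
    norm_num

def seg : Set (Fin 2 → ℝ) := {x | x 0 ^ 2 ≤ 1 ∧ x 1 = 0}

lemma seg_face : IsFace halfDisk seg := by
  constructor
  · intro x hx y hy t s ht hs hts
    constructor
    · have := hx.1
      have := hy.1
      show (t • x + s • y) 0 ^ 2 ≤ 1
      simp only [Pi.add_apply, Pi.smul_apply, smul_eq_mul]
      nlinarith [mul_nonneg ht hs, sq_nonneg (x 0 - y 0), mul_le_mul_of_nonneg_left hx.1 ht,
        mul_le_mul_of_nonneg_left hy.1 hs]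
    · show (t • x + s • y) 1 = 0
      simp [Pi.add_apply, Pi.smul_apply, hx.2, hy.2]
  · constructor
    · intro x hx
      refine ⟨?_, hx.2.ge⟩
      rw [hx.2] at *
      nlinarith [hx.1]
    · intro y hy z hz x hx hseg
      obtain ⟨t, s, ht, hs, hts, hsum⟩ := hseg
      have h1 : t * y 1 + s * z 1 = 0 := by
        have := congrFun hsum 1
        simp only [Pi.add_apply, Pi.smul_apply, smul_eq_mul] at this
        rw [this, hx.2]
      have hty : t * y 1 = 0 :=
        le_antisymm (by nlinarith [mul_nonneg hs.le hz.2]) (mul_nonneg ht.le hy.2)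
      have htz : s * z 1 = 0 :=
        le_antisymm (by nlinarith [mul_nonneg ht.le hy.2]) (mul_nonneg hs.le hz.2)
      have hy1 : y 1 = 0 := by
        rcases mul_eq_zero.1 hty with h | h
        · exact absurd h ht.ne'
        · exact h
      have hz1 : z 1 = 0 := by
        rcases mul_eq_zero.1 htz with h | h
        · exact absurd h hs.ne'
        · exact h
      constructor
      · nlinarith [hy.1, sq_nonneg (y 1), hy1]
      · exact hy1

lemma part3 : ¬ IsFacet halfDisk (halfDisk ∩ {x | ∑ i, (![1, 0] : Fin 2 → ℝ) i * x i = 1}) := by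
  rintro ⟨hFace, hne, hmax⟩
  have hsegne : seg ≠ halfDisk := by
    intro h
    have h01 : (![0,1] : Fin 2 → ℝ) ∈ halfDisk := by constructor <;> norm_num [halfDisk]
    rw [← h] at h01
    have := h01.2
    norm_num [seg] at this
  have hsub : halfDisk ∩ {x | ∑ i, (![1, 0] : Fin 2 → ℝ) i * x i = 1} ⊆ seg := by
    rw [part2]
    intro x hx
    rw [Set.mem_singleton_iff] at hx
    subst hx
    constructor <;> norm_num [seg]
  have heq := hmax seg seg_face hsegne hsub
  rw [part2] at heq
  have h00 : (![0,0] : Fin 2 → ℝ) ∈ seg := by constructor <;> norm_num [seg]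
  rw [heq, Set.mem_singleton_iff] at h00
  have := congrFun h00 0
  norm_num at this


/-- Example: for the half-disk S, the inequality x₁ ≤ 1 is a FII of S, even though the
face S ∩ {x : x₁ = 1} is the single point (1,0), which is not a facet of S (so x₁ ≤ 1
is not facet-defining). -/
theorem halfDisk_FII_not_facetDefining :
    IsFII halfDisk ![1, 0] 1 ∧
    halfDisk ∩ {x | ∑ i, (![1, 0] : Fin 2 → ℝ) i * x i = 1} = {![1, 0]} ∧
    ¬ IsFacet halfDisk (halfDisk ∩ {x | ∑ i, (![1, 0] : Fin 2 → ℝ) i * x i = 1}) ∧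
    ¬ FacetDefining halfDisk ![1, 0] 1 := by
  refine ⟨⟨?_, FII_part⟩, part2, part3, fun h => part3 h.2⟩
  intro x hx
  simp only [Set.mem_setOf_eq, Fin.sum_univ_two, Matrix.cons_val_zero, Matrix.cons_val_one,
    Matrix.head_cons]
  nlinarith [hx.1, hx.2, sq_nonneg (x 1), sq_nonneg (x 0 - 1)]
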